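/- arXiv:2006.06603 — 2 statements merged into one kernel-verified Lean document; each statement's English description precedes it below -/
import Mathlib

section
/- Let σ be a strongly convex rational polyhedral cone in ℝⁿ and let S_σ = {m ∈ ℤⁿ : ⟨m, x⟩ ≥ 0 for all x ∈ σ} be its dual monoid. Then the natural evaluation map from σ to the set of monoid homomorphisms Hom(S_σ, ℝ_{≥0}) is a bijection. -/
/-- A strongly convex rational polyhedral cone in `ℝⁿ`: generated by finitely many
integer vectors and containing no line. -/
def IsStronglyConvexRatCone (n : ℕ) (σ : Set (Fin n → ℝ)) : Prop :=
  (∃ (m : ℕ) (g : Fin m → (Fin n → ℤ)),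
      σ = {x | ∃ c : Fin m → ℝ, (∀ i, 0 ≤ c i) ∧
        x = ∑ i, c i • (fun j => (g i j : ℝ))}) ∧
  ∀ x ∈ σ, -x ∈ σ → x = 0

/-- The dual monoid `S_σ = {m ∈ ℤⁿ : ⟨m, x⟩ ≥ 0 for all x ∈ σ}`. -/
def dualMonoid (n : ℕ) (σ : Set (Fin n → ℝ)) : AddSubmonoid (Fin n → ℤ) where
  carrier := {m | ∀ x ∈ σ, 0 ≤ ∑ j, (m j : ℝ) * x j}
  zero_mem' := by intro x _; simp
  add_mem' := by
    intro a b ha hb x hx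
    have h1 := ha x hx
    have h2 := hb x hx
    have : ∑ j, (((a + b) j : ℤ) : ℝ) * x j
        = (∑ j, (a j : ℝ) * x j) + ∑ j, (b j : ℝ) * x j := by
      rw [← Finset.sum_add_distrib]
      apply Finset.sum_congr rfl
      intro j _
      push_cast [Pi.add_apply]
      ring
    rw [this]
    linarith


open Finset Topology

variable {n : ℕ}

/-- The cone generated by a finite family of vectors. -/
def coneOf {n m : ℕ} (v : Fin m → (Fin n → ℝ)) : Set (Fin n → ℝ) :=
  {x | ∃ c : Fin m → ℝ, (∀ i, 0 ≤ c i) ∧ x = ∑ i, c i • v i}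

lemma zero_mem_coneOf {m : ℕ} (v : Fin m → (Fin n → ℝ)) : 0 ∈ coneOf v :=
  ⟨0, fun _ => le_refl _, by simp⟩

lemma smul_mem_coneOf {m : ℕ} {v : Fin m → (Fin n → ℝ)} {x : Fin n → ℝ} {t : ℝ}
    (ht : 0 ≤ t) (hx : x ∈ coneOf v) : t • x ∈ coneOf v := by
  obtain ⟨c, hc, rfl⟩ := hx
  refine ⟨fun i => t * c i, fun i => mul_nonneg ht (hc i), ?_⟩
  rw [Finset.smul_sum]
  exact Finset.sum_congr rfl fun i _ => (smul_smul t (c i) (v i))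

lemma add_mem_coneOf {m : ℕ} {v : Fin m → (Fin n → ℝ)} {x y : Fin n → ℝ}
    (hx : x ∈ coneOf v) (hy : y ∈ coneOf v) : x + y ∈ coneOf v := by
  obtain ⟨c, hc, rfl⟩ := hx
  obtain ⟨d, hd, rfl⟩ := hy
  refine ⟨fun i => c i + d i, fun i => add_nonneg (hc i) (hd i), ?_⟩
  rw [← Finset.sum_add_distrib]
  exact Finset.sum_congr rfl fun i _ => (add_smul (c i) (d i) (v i)).symm

lemma convex_coneOf {m : ℕ} (v : Fin m → (Fin n → ℝ)) : Convex ℝ (coneOf v) := by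
  intro x hx y hy a b ha hb _
  exact add_mem_coneOf (smul_mem_coneOf ha hx) (smul_mem_coneOf hb hy)

lemma isClosed_coneOf : ∀ (m : ℕ) (v : Fin m → (Fin n → ℝ)), IsClosed (coneOf v) := by
  intro m
  induction m using Nat.strong_induction_on with
  | _ m ih =>
    intro v
    by_cases hli : LinearIndependent ℝ v
    · -- image of the nonnegative orthant under a closed embedding
      set L : (Fin m → ℝ) →ₗ[ℝ] (Fin n → ℝ) :=
        (LinearMap.lsum ℝ (fun _ : Fin m => ℝ) ℕ fun i => LinearMap.id.smulRight (v i)) with hL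
      have hker : LinearMap.ker L = ⊥ := (Fintype.linearIndependent_iff').mp hli
      have hemb : IsClosedEmbedding L := LinearMap.isClosedEmbedding_of_injective hker
      have hset : coneOf v = L '' {c | ∀ i, 0 ≤ c i} := by
        ext x
        constructor
        · rintro ⟨c, hc, rfl⟩
          exact ⟨c, hc, by simp [hL, LinearMap.lsum_apply]⟩
        · rintro ⟨c, hc, rfl⟩
          exact ⟨c, hc, by simp [hL, LinearMap.lsum_apply]⟩
      rw [hset]
      have hcl : {c : Fin m → ℝ | ∀ i, 0 ≤ c i} = Set.pi Set.univ (fun _ => Set.Ici 0) := by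
        ext c; simp [Set.mem_pi, Pi.le_def]
      exact hemb.isClosedMap _ (hcl ▸ isClosed_set_pi fun i _ => isClosed_Ici)
    · -- a dependence relation lets us drop one generator
      obtain ⟨a, ha0, i₁, hi₁⟩ := Fintype.not_linearIndependent_iff.mp hli
      obtain ⟨a, ha0, i₁, hi₁⟩ : ∃ a : Fin m → ℝ, ∑ i, a i • v i = 0 ∧ ∃ i, a i < 0 := by
        rcases lt_or_gt_of_ne hi₁ with h | h
        · exact ⟨a, ha0, i₁, h⟩
        · refine ⟨-a, by simp [ha0], i₁, by simpa using h⟩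
      -- m cannot be 0
      rcases m with - | k
      · exact absurd i₁.2 (by simp)
      -- every point of the cone lies in a subcone omitting some generator
      have hsub : coneOf v = ⋃ i : Fin (k + 1), coneOf (v ∘ i.succAbove) := by
        apply Set.Subset.antisymm
        · rintro x ⟨c, hc, rfl⟩
          classical
          set I : Finset (Fin (k + 1)) := Finset.univ.filter (fun i => a i < 0) with hI
          have hIne : I.Nonempty := ⟨i₁, by simp [hI, hi₁]⟩
          obtain ⟨i₀, hi₀I, hi₀min⟩ :=
            I.exists_min_image (fun i => c i / (-a i)) hIne
          have hai₀ : a i₀ < 0 := by simpa [hI] using hi₀I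
          set t : ℝ := c i₀ / (-a i₀) with ht
          have htnn : 0 ≤ t := div_nonneg (hc i₀) (by linarith)
          set c' : Fin (k + 1) → ℝ := fun i => c i + t * a i with hc'
          have hc'nn : ∀ i, 0 ≤ c' i := by
            intro i
            rcases le_or_gt 0 (a i) with h | h
            · have : 0 ≤ t * a i := mul_nonneg htnn h
              simp only [hc']; linarith [hc i]
            · have hiI : i ∈ I := by simp [hI, h]
              have := hi₀min i hiI
              -- t ≤ c i / (-a i), so c i + t * a i ≥ 0
              have h2 : t * (-a i) ≤ c i := by
                rw [← le_div_iff₀ (by linarith : (0:ℝ) < -a i)]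
                exact this
              simp only [hc']; nlinarith
          have hc'i₀ : c' i₀ = 0 := by
            have hne : a i₀ ≠ 0 := ne_of_lt hai₀
            simp only [hc', ht]
            rw [div_mul_eq_mul_div, div_neg, mul_div_assoc, div_self hne, mul_one,
              add_neg_cancel]
          have hx : ∑ i, c i • v i = ∑ i, c' i • v i := by
            have : ∑ i, c' i • v i = ∑ i, c i • v i + t • ∑ i, a i • v i := by
              rw [Finset.smul_sum, ← Finset.sum_add_distrib]
              refine Finset.sum_congr rfl fun i _ => ?_
              simp only [hc', add_smul, smul_smul]
            rw [this, ha0, smul_zero, add_zero]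
          refine Set.mem_iUnion.mpr ⟨i₀, ⟨fun j => c' (i₀.succAbove j),
            fun j => hc'nn _, ?_⟩⟩
          rw [hx, Fin.sum_univ_succAbove (fun i => c' i • v i) i₀, hc'i₀, zero_smul, zero_add]
          rfl
        · intro x hx
          obtain ⟨i, c, hc, rfl⟩ := Set.mem_iUnion.mp hx
          classical
          refine ⟨fun j => if h : ∃ l, i.succAbove l = j then c h.choose else 0, ?_, ?_⟩
          · intro j; by_cases h : ∃ l, i.succAbove l = j <;> simp [h, hc]
          · rw [Fin.sum_univ_succAbove
              (fun j => (if h : ∃ l, i.succAbove l = j then c h.choose else 0) • v j) i]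
            have h0 : ¬∃ l, i.succAbove l = i := by
              intro ⟨l, hl⟩; exact Fin.succAbove_ne i l hl
            rw [dif_neg h0, zero_smul, zero_add]
            refine Finset.sum_congr rfl fun l _ => ?_
            have h1 : ∃ l', i.succAbove l' = i.succAbove l := ⟨l, rfl⟩
            rw [dif_pos h1]
            have := h1.choose_spec
            have heq : h1.choose = l := i.succAbove_right_injective this
            rw [heq]; rfl
      rw [hsub]
      exact isClosed_iUnion_of_finite fun i => ih k (by omega) (v ∘ i.succAbove)
/-- The standard pairing on `ℝⁿ`. -/
def ip {n : ℕ} (a b : Fin n → ℝ) : ℝ := ∑ j, a j * b j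

lemma ip_nonneg_sum {m : ℕ} {v : Fin m → (Fin n → ℝ)} {b : Fin n → ℝ}
    {c : Fin m → ℝ} : ip (∑ i, c i • v i) b = ∑ i, c i * ip (v i) b := by
  unfold ip
  simp only [Finset.sum_apply, Pi.smul_apply, smul_eq_mul, Finset.sum_mul, Finset.mul_sum]
  rw [Finset.sum_comm]
  exact Finset.sum_congr rfl fun i _ => Finset.sum_congr rfl fun j _ => by ring

lemma ip_comm {a b : Fin n → ℝ} : ip a b = ip b a :=
  Finset.sum_congr rfl fun j _ => mul_comm _ _

lemma ip_zero_right {a : Fin n → ℝ} : ip a 0 = 0 := by simp [ip]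

lemma ip_neg_right {a b : Fin n → ℝ} : ip a (-b) = -ip a b := by
  simp [ip, Finset.sum_neg_distrib]

lemma ip_sum_left {ι : Type*} (s : Finset ι) (f : ι → (Fin n → ℝ)) (b : Fin n → ℝ) :
    ip (∑ i ∈ s, f i) b = ∑ i ∈ s, ip (f i) b := by
  unfold ip
  rw [Finset.sum_comm]
  refine Finset.sum_congr rfl fun j _ => ?_
  rw [Finset.sum_apply, Finset.sum_mul]

/-- Each generator belongs to the cone. -/
lemma generator_mem_coneOf {m : ℕ} (v : Fin m → (Fin n → ℝ)) (i : Fin m) :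
    v i ∈ coneOf v := by
  classical
  refine ⟨fun k => if i = k then 1 else 0, fun k => by positivity, ?_⟩
  simp [ite_smul]

lemma mem_coneOf_iff_ip {m : ℕ} {v : Fin m → (Fin n → ℝ)} {x : Fin n → ℝ}
    (hx : x ∈ coneOf v) {w : Fin n → ℝ} (hw : ∀ i, 0 ≤ ip (v i) w) : 0 ≤ ip x w := by
  obtain ⟨c, hc, rfl⟩ := hx
  rw [ip_nonneg_sum]
  exact Finset.sum_nonneg fun i _ => mul_nonneg (hc i) (hw i)

/-- Farkas' lemma: a point outside a finitely generated cone can be separated from it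
by a linear functional that is nonnegative on the cone. -/
lemma farkas {m : ℕ} (v : Fin m → (Fin n → ℝ)) {x : Fin n → ℝ} (hx : x ∉ coneOf v) :
    ∃ w : Fin n → ℝ, (∀ i, 0 ≤ ip w (v i)) ∧ ip w x < 0 := by
  classical
  obtain ⟨f, u, hfs, hfx⟩ :=
    geometric_hahn_banach_closed_point (convex_coneOf v) (isClosed_coneOf m v) hx
  have hu0 : 0 < u := by have := hfs 0 (zero_mem_coneOf v); simpa using this
  have hle : ∀ y ∈ coneOf v, f y ≤ 0 := by
    intro y hy
    by_contra h
    push_neg at h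
    have ht : (0:ℝ) ≤ u / f y := le_of_lt (div_pos hu0 h)
    have h2 := hfs _ (smul_mem_coneOf ht hy)
    rw [map_smul, smul_eq_mul, div_mul_cancel₀ _ (ne_of_gt h)] at h2
    exact lt_irrefl u h2
  set w : Fin n → ℝ := fun j => -(f (fun k => if j = k then 1 else 0)) with hw
  have key : ∀ y : Fin n → ℝ, ip w y = -f y := by
    intro y
    have h1 : f y = ∑ j, y j * f (fun k => if j = k then 1 else 0) := by
      conv_lhs => rw [pi_eq_sum_univ y]
      rw [map_sum]
      exact Finset.sum_congr rfl fun j _ => by rw [map_smul, smul_eq_mul]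
    rw [h1, ip, ← Finset.sum_neg_distrib]
    exact Finset.sum_congr rfl fun j _ => by simp [hw]; ring
  refine ⟨w, fun i => ?_, ?_⟩
  · rw [key]
    simpa using hle (v i) (generator_mem_coneOf v i)
  · rw [key]
    have : 0 < f x := lt_trans hu0 hfx
    linarith

/-- Biduality for finitely generated cones. -/
lemma mem_coneOf_of_dual {m : ℕ} {v : Fin m → (Fin n → ℝ)} {x : Fin n → ℝ}
    (h : ∀ w : Fin n → ℝ, (∀ i, 0 ≤ ip w (v i)) → 0 ≤ ip w x) : x ∈ coneOf v := by
  by_contra hx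
  obtain ⟨w, hw1, hw2⟩ := farkas v hx
  exact absurd (h w hw1) (not_le.mpr hw2)
lemma ip_zero_left {b : Fin n → ℝ} : ip 0 b = 0 := by simp [ip]

/-- If the cone contains no line, there is a vector pairing strictly positively with every
nonzero generator and nonnegatively with all of them. -/
lemma exists_strict_dual {m : ℕ} {v : Fin m → (Fin n → ℝ)}
    (hline : ∀ x ∈ coneOf v, -x ∈ coneOf v → x = 0) :
    ∃ u₀ : Fin n → ℝ, (∀ i, 0 ≤ ip u₀ (v i)) ∧ ∀ i, v i ≠ 0 → 0 < ip u₀ (v i) := by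
  classical
  have hex : ∀ i : Fin m, v i ≠ 0 → ∃ u, (∀ k, 0 ≤ ip u (v k)) ∧ 0 < ip u (v i) := by
    intro i hvi
    by_contra h
    push_neg at h
    have hzero : ∀ u, (∀ k, 0 ≤ ip u (v k)) → ip u (v i) = 0 := fun u hu =>
      le_antisymm (h u hu) (hu i)
    have hneg : -(v i) ∈ coneOf v := mem_coneOf_of_dual (fun w hw => by
      rw [ip_neg_right, hzero w hw, neg_zero])
    exact hvi (hline (v i) (generator_mem_coneOf v i) hneg)
  set u' : Fin m → (Fin n → ℝ) := fun i =>
    if h : v i = 0 then 0 else (hex i h).choose with hu'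
  have hu'feas : ∀ i k, 0 ≤ ip (u' i) (v k) := by
    intro i k
    by_cases h : v i = 0
    · simp [hu', h, ip_zero_left]
    · simp only [hu', dif_neg h]
      exact (hex i h).choose_spec.1 k
  have hu'strict : ∀ i, v i ≠ 0 → 0 < ip (u' i) (v i) := by
    intro i h
    simp only [hu', dif_neg h]
    exact (hex i h).choose_spec.2
  refine ⟨∑ i, u' i, fun k => ?_, fun k hk => ?_⟩
  · rw [ip_sum_left]
    exact Finset.sum_nonneg fun i _ => hu'feas i k
  · rw [ip_sum_left]
    calc (0:ℝ) < ip (u' k) (v k) := hu'strict k hk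
      _ ≤ ∑ i, ip (u' i) (v k) :=
        Finset.single_le_sum (fun i _ => hu'feas i k) (Finset.mem_univ k)

/-- Strict linear inequalities with real solutions have rational solutions. -/
lemma rat_approx {ι : Type*} [Fintype ι] (w : ι → (Fin n → ℝ)) (u : Fin n → ℝ)
    (h : ∀ i, 0 < ip u (w i)) :
    ∃ q : Fin n → ℚ, ∀ i, 0 < ip (fun j => (q j : ℝ)) (w i) := by
  classical
  rcases isEmpty_or_nonempty ι with hι | hι
  · exact ⟨0, fun i => isEmptyElim i⟩
  obtain ⟨i₀, -, hmin⟩ := Finset.exists_min_image Finset.univ (fun i => ip u (w i))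
    ⟨Classical.arbitrary ι, Finset.mem_univ _⟩
  set c := ip u (w i₀) with hc
  have hc0 : 0 < c := h i₀
  set B : ℝ := 1 + ∑ i, ∑ j, |w i j| with hB
  have habs : (0:ℝ) ≤ ∑ i, ∑ j, |w i j| :=
    Finset.sum_nonneg fun i _ => Finset.sum_nonneg fun j _ => abs_nonneg _
  have hB1 : (1:ℝ) ≤ B := by simp only [hB]; linarith
  have hBbound : ∀ i, ∑ j, |w i j| ≤ B := by
    intro i
    have h1 : ∑ j, |w i j| ≤ ∑ i, ∑ j, |w i j| :=
      Finset.single_le_sum (f := fun i => ∑ j, |w i j|)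
        (fun i _ => Finset.sum_nonneg fun j _ => abs_nonneg _) (Finset.mem_univ i)
    simp only [hB]; linarith
  set δ : ℝ := c / (2 * B) with hδ
  have hδ0 : 0 < δ := div_pos hc0 (by linarith)
  have hq : ∀ j : Fin n, ∃ q : ℚ, u j < q ∧ (q : ℝ) < u j + δ :=
    fun j => exists_rat_btwn (by linarith)
  choose q hq1 hq2 using hq
  refine ⟨q, fun i => ?_⟩
  have key : ip (fun j => (q j : ℝ)) (w i) = ip u (w i) + ∑ j, ((q j : ℝ) - u j) * w i j := by
    unfold ip
    rw [← Finset.sum_add_distrib]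
    exact Finset.sum_congr rfl fun j _ => by ring
  have hbound : ∀ j, -(δ * |w i j|) ≤ ((q j : ℝ) - u j) * w i j := by
    intro j
    have h1 : 0 ≤ (q j : ℝ) - u j := by linarith [hq1 j]
    have h2 : (q j : ℝ) - u j ≤ δ := by linarith [hq2 j]
    nlinarith [neg_abs_le (w i j), abs_nonneg (w i j), le_abs_self (w i j)]
  have hsum : -(δ * B) ≤ ∑ j, ((q j : ℝ) - u j) * w i j := by
    have h1 : -(δ * B) ≤ -(δ * ∑ j, |w i j|) := by
      have := hBbound i
      nlinarith
    have h2 : -(δ * ∑ j, |w i j|) = ∑ j, -(δ * |w i j|) := by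
      rw [Finset.mul_sum, Finset.sum_neg_distrib]
    have h3 : ∑ j, -(δ * |w i j|) ≤ ∑ j, ((q j : ℝ) - u j) * w i j :=
      Finset.sum_le_sum fun j _ => hbound j
    linarith
  have hδB : δ * B = c / 2 := by
    rw [hδ, div_mul_eq_mul_div, mul_div_mul_right _ _ (by linarith : (0:ℝ) < B).ne']
  have hci : c ≤ ip u (w i) := hmin i (Finset.mem_univ i)
  rw [key]
  clear_value c B δ
  linarith

/-- Clear denominators: a rational vector is a positive natural multiple of an integer vector. -/
lemma exists_int_scale (q : Fin n → ℚ) :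
    ∃ (p : Fin n → ℤ) (d : ℕ), 0 < d ∧ ∀ j, (p j : ℝ) = (d : ℝ) * (q j : ℝ) := by
  classical
  set d : ℕ := ∏ j, (q j).den with hd
  have hd0 : 0 < d := Finset.prod_pos fun j _ => (q j).pos
  refine ⟨fun j => (q j).num * ((d / (q j).den : ℕ) : ℤ), d, hd0, fun j => ?_⟩
  have hdvd : (q j).den ∣ d := Finset.dvd_prod_of_mem _ (Finset.mem_univ j)
  have hden : ((q j).den : ℝ) ≠ 0 := Nat.cast_ne_zero.mpr (q j).den_nz
  have hcast : ((d / (q j).den : ℕ) : ℝ) = (d : ℝ) / ((q j).den : ℝ) :=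
    Nat.cast_div hdvd hden
  rw [Int.cast_mul, Int.cast_natCast, hcast, Rat.cast_def]
  field_simp
/-- Cast an integer vector to a real vector. -/
def itr {n : ℕ} (a : Fin n → ℤ) : Fin n → ℝ := fun j => (a j : ℝ)

lemma ip_add_left' {a b c : Fin n → ℝ} : ip (a + b) c = ip a c + ip b c := by
  unfold ip
  rw [← Finset.sum_add_distrib]
  exact Finset.sum_congr rfl fun j _ => by simp [Pi.add_apply]; ring

lemma ip_smul_left' {a c : Fin n → ℝ} {t : ℝ} : ip (t • a) c = t * ip a c := by
  unfold ip
  rw [Finset.mul_sum]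
  exact Finset.sum_congr rfl fun j _ => by simp [Pi.smul_apply]; ring

lemma ip_itr_eq_zero {a : Fin n → ℤ} {b : Fin n → ℝ} (hb : b = 0) : ip (itr a) b = 0 := by
  subst hb; simp [ip, itr]

/-- Pairing of an integer linear combination. -/
lemma ip_itr_lincomb {N : ℕ} {p w : Fin n → ℤ} {b : Fin n → ℝ} :
    ip (itr (N • p + w)) b = (N : ℝ) * ip (itr p) b + ip (itr w) b := by
  unfold ip itr
  rw [Finset.mul_sum, ← Finset.sum_add_distrib]
  refine Finset.sum_congr rfl fun j _ => ?_
  have : ((N • p + w) j : ℝ) = (N : ℝ) * (p j : ℝ) + (w j : ℝ) := by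
    simp only [Pi.add_apply, Pi.smul_apply, nsmul_eq_mul, Int.cast_add, Int.cast_mul,
      Int.cast_natCast, Pi.mul_apply, Pi.natCast_apply]
  rw [this]; ring

lemma ip_itr_scale {p : Fin n → ℤ} {d : ℕ} {q : Fin n → ℚ}
    (h : ∀ j, (p j : ℝ) = (d : ℝ) * (q j : ℝ)) (b : Fin n → ℝ) :
    ip (itr p) b = (d : ℝ) * ip (fun j => (q j : ℝ)) b := by
  unfold ip itr
  rw [Finset.mul_sum]
  exact Finset.sum_congr rfl fun j _ => by rw [h j]; ring

/-- There is an integer vector pairing strictly positively with all nonzero generators. -/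
lemma exists_int_strict {m : ℕ} {v : Fin m → (Fin n → ℝ)}
    (hline : ∀ x ∈ coneOf v, -x ∈ coneOf v → x = 0) :
    ∃ p : Fin n → ℤ, (∀ i, 0 ≤ ip (itr p) (v i)) ∧ ∀ i, v i ≠ 0 → 0 < ip (itr p) (v i) := by
  obtain ⟨u₀, hu₀f, hu₀s⟩ := exists_strict_dual hline
  obtain ⟨q, hq⟩ := rat_approx (ι := {i : Fin m // v i ≠ 0}) (fun i => v i.1) u₀
    (fun i => hu₀s i.1 i.2)
  obtain ⟨p, d, hd0, hpd⟩ := exists_int_scale q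
  have hd0' : (0:ℝ) < d := by exact_mod_cast hd0
  refine ⟨p, fun i => ?_, fun i hi => ?_⟩
  · by_cases h : v i = 0
    · rw [ip_itr_eq_zero h]
    · rw [ip_itr_scale hpd]
      exact le_of_lt (mul_pos hd0' (hq ⟨i, h⟩))
  · rw [ip_itr_scale hpd]
    exact mul_pos hd0' (hq ⟨i, hi⟩)

/-- Integer Farkas: a point outside the cone is separated by an integer functional that is
nonnegative on the cone. -/
lemma exists_int_sep {m : ℕ} {v : Fin m → (Fin n → ℝ)}
    (hline : ∀ x ∈ coneOf v, -x ∈ coneOf v → x = 0) {x : Fin n → ℝ} (hx : x ∉ coneOf v) :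
    ∃ p : Fin n → ℤ, (∀ i, 0 ≤ ip (itr p) (v i)) ∧ ip (itr p) x < 0 := by
  obtain ⟨u₀, hu₀f, hu₀s⟩ := exists_strict_dual hline
  obtain ⟨w, hwf, hwx⟩ := farkas v hx
  set A : ℝ := ip w x with hA
  set Bu : ℝ := ip u₀ x with hBu
  set ε : ℝ := (-A) / (2 * (1 + |Bu|)) with hε
  have habs : (0:ℝ) ≤ |Bu| := abs_nonneg _
  have hε0 : 0 < ε := div_pos (by linarith) (by linarith)
  have hεB : ε * (1 + |Bu|) = -A / 2 := by
    rw [hε]; field_simp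
  set w' : Fin n → ℝ := w + ε • u₀ with hw'
  have hw'v : ∀ i, ip w' (v i) = ip w (v i) + ε * ip u₀ (v i) := by
    intro i; rw [hw', ip_add_left', ip_smul_left']
  have hw'x : ip w' x < 0 := by
    have h1 : ip w' x = A + ε * Bu := by rw [hw', ip_add_left', ip_smul_left', ← hA, ← hBu]
    have h2 : ε * Bu ≤ ε * (1 + |Bu|) := by
      have := le_abs_self Bu
      nlinarith
    rw [h1]
    rw [hεB] at h2
    linarith
  -- strict system: nonzero generators plus `-x`
  have hstrict : ∀ k : ({i : Fin m // v i ≠ 0} ⊕ Unit),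
      0 < ip w' (Sum.elim (fun i => v i.1) (fun _ => -x) k) := by
    rintro (⟨i, hi⟩ | ⟨⟩)
    · have h1 := hwf i
      have h2 := hu₀s i hi
      rw [Sum.elim_inl, hw'v]
      nlinarith
    · rw [Sum.elim_inr, ip_neg_right]
      linarith
  obtain ⟨q, hq⟩ := rat_approx _ w' hstrict
  obtain ⟨p, d, hd0, hpd⟩ := exists_int_scale q
  have hd0' : (0:ℝ) < d := by exact_mod_cast hd0
  refine ⟨p, fun i => ?_, ?_⟩
  · by_cases h : v i = 0
    · rw [ip_itr_eq_zero h]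
    · rw [ip_itr_scale hpd]
      have := hq (Sum.inl ⟨i, h⟩)
      rw [Sum.elim_inl] at this
      exact le_of_lt (mul_pos hd0' this)
  · rw [ip_itr_scale hpd]
    have := hq (Sum.inr ())
    rw [Sum.elim_inr, ip_neg_right] at this
    nlinarith

/-- Archimedean property: any integer vector can be pushed into the dual cone by adding a
large multiple of a strictly interior integer point. -/
lemma exists_arch {m : ℕ} {v : Fin m → (Fin n → ℝ)} {p : Fin n → ℤ}
    (hps : ∀ i, v i ≠ 0 → 0 < ip (itr p) (v i)) (w : Fin n → ℤ) :
    ∃ N : ℕ, ∀ i, 0 ≤ ip (itr (N • p + w)) (v i) := by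
  classical
  have hNi : ∀ i : Fin m, ∃ N : ℕ, v i ≠ 0 →
      0 ≤ (N : ℝ) * ip (itr p) (v i) + ip (itr w) (v i) := by
    intro i
    by_cases h : v i = 0
    · exact ⟨0, fun h' => absurd h h'⟩
    · obtain ⟨N, hN⟩ := exists_nat_ge ((-(ip (itr w) (v i))) / ip (itr p) (v i))
      refine ⟨N, fun _ => ?_⟩
      have hpos := hps i h
      rw [div_le_iff₀ hpos] at hN
      linarith
  choose f hf using hNi
  refine ⟨Finset.univ.sup f, fun i => ?_⟩
  rw [ip_itr_lincomb]
  by_cases h : v i = 0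
  · rw [ip_itr_eq_zero h, ip_itr_eq_zero h]
    simp
  · have h1 := hf i h
    have h2 : ((f i : ℕ) : ℝ) ≤ ((Finset.univ.sup f : ℕ) : ℝ) := by
      exact_mod_cast Finset.le_sup (Finset.mem_univ i)
    have hpos := hps i h
    nlinarith
lemma hip_eq {n : ℕ} (z : Fin n → ℤ) (x : Fin n → ℝ) :
    ip (itr z) x = ∑ j, (z j : ℝ) * x j := rfl

/-- The evaluation map from a strongly convex rational polyhedral cone `σ` to the set of
monoid homomorphisms `Hom(S_σ, ℝ_{≥0})` is a bijection: it is injective, and every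
additive monoid homomorphism `S_σ → ℝ` with nonnegative values arises by evaluation at a
(unique) point of `σ`. -/
theorem eval_bijective (n : ℕ) (σ : Set (Fin n → ℝ))
    (hσ : IsStronglyConvexRatCone n σ) :
    (∀ x₁ ∈ σ, ∀ x₂ ∈ σ,
        (∀ m ∈ dualMonoid n σ, ∑ j, (m j : ℝ) * x₁ j = ∑ j, (m j : ℝ) * x₂ j) → x₁ = x₂) ∧
    (∀ φ : dualMonoid n σ →+ ℝ, (∀ m, 0 ≤ φ m) →
        ∃ x ∈ σ, ∀ m : dualMonoid n σ, φ m = ∑ j, ((m : Fin n → ℤ) j : ℝ) * x j) := by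
  classical
  obtain ⟨⟨m, g, hg⟩, hline'⟩ := hσ
  set v : Fin m → (Fin n → ℝ) := fun i => itr (g i) with hv
  have hσc : σ = coneOf v := hg
  have hline : ∀ x ∈ coneOf v, -x ∈ coneOf v → x = 0 := by
    rw [← hσc]; exact hline'
  have hmemS : ∀ z : Fin n → ℤ, z ∈ dualMonoid n σ ↔ ∀ x ∈ σ, 0 ≤ ∑ j, (z j : ℝ) * x j :=
    fun z => Iff.rfl
  have hchar : ∀ z : Fin n → ℤ, z ∈ dualMonoid n σ ↔ ∀ i, 0 ≤ ip (itr z) (v i) := by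
    intro z
    rw [hmemS]
    constructor
    · intro hz i
      rw [hip_eq]
      exact hz (v i) (hσc ▸ generator_mem_coneOf v i)
    · intro hz x hx
      rw [hσc] at hx
      have h2 : 0 ≤ ip x (itr z) :=
        mem_coneOf_iff_ip hx (fun i => by rw [ip_comm]; exact hz i)
      rw [ip_comm] at h2
      rw [← hip_eq]
      exact h2
  obtain ⟨p, hpf, hps⟩ := exists_int_strict hline
  have hpS : p ∈ dualMonoid n σ := (hchar p).mpr hpf
  have harch : ∀ w : Fin n → ℤ, ∃ N : ℕ, (N • p + w) ∈ dualMonoid n σ := by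
    intro w
    obtain ⟨N, hN⟩ := exists_arch hps w
    exact ⟨N, (hchar _).mpr hN⟩
  constructor
  · -- injectivity
    intro x₁ hx₁ x₂ hx₂ h
    funext j
    set e : Fin n → ℤ := fun k => if j = k then 1 else 0 with he
    obtain ⟨N, hN⟩ := harch e
    have h1 : ip (itr p) x₁ = ip (itr p) x₂ := by
      rw [hip_eq, hip_eq]; exact h p hpS
    have h2 : ip (itr (N • p + e)) x₁ = ip (itr (N • p + e)) x₂ := by
      rw [hip_eq, hip_eq]; exact h _ hN
    rw [ip_itr_lincomb, ip_itr_lincomb] at h2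
    have he1 : ∀ x : Fin n → ℝ, ip (itr e) x = x j := by
      intro x
      rw [hip_eq]
      have : ∀ k, ((e k : ℤ) : ℝ) * x k = if j = k then x k else 0 := by
        intro k
        by_cases hk : j = k <;> simp [he, hk]
      rw [Finset.sum_congr rfl fun k _ => this k]
      simp
    rw [he1, he1] at h2
    rw [h1] at h2
    linarith
  · -- surjectivity
    intro φ hφ
    choose Nf hNf using harch
    set P : dualMonoid n σ := ⟨p, hpS⟩ with hP
    set ψ : (Fin n → ℤ) → ℝ :=
      fun w => φ ⟨Nf w • p + w, hNf w⟩ - (Nf w : ℝ) * φ P with hψ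
    have wd : ∀ (w : Fin n → ℤ) (N₁ N₂ : ℕ) (h₁ : N₁ • p + w ∈ dualMonoid n σ)
        (h₂ : N₂ • p + w ∈ dualMonoid n σ),
        φ ⟨N₁ • p + w, h₁⟩ - (N₁ : ℝ) * φ P = φ ⟨N₂ • p + w, h₂⟩ - (N₂ : ℝ) * φ P := by
      intro w N₁ N₂ h₁ h₂
      have key : (⟨N₁ • p + w, h₁⟩ : dualMonoid n σ) + N₂ • P
          = ⟨N₂ • p + w, h₂⟩ + N₁ • P := by
        apply Subtype.ext
        show (N₁ • p + w) + N₂ • p = (N₂ • p + w) + N₁ • p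
        abel
      have hφk := congrArg φ key
      rw [map_add, map_add, map_nsmul, map_nsmul] at hφk
      have e1 : (N₂ • φ P : ℝ) = (N₂ : ℝ) * φ P := nsmul_eq_mul _ _
      have e2 : (N₁ • φ P : ℝ) = (N₁ : ℝ) * φ P := nsmul_eq_mul _ _
      rw [e1, e2] at hφk
      linarith
    have ψadd : ∀ w₁ w₂, ψ (w₁ + w₂) = ψ w₁ + ψ w₂ := by
      intro w₁ w₂
      have hmem : ((Nf w₁ + Nf w₂) • p + (w₁ + w₂)) ∈ dualMonoid n σ := by
        have heq : (Nf w₁ + Nf w₂) • p + (w₁ + w₂)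
            = (Nf w₁ • p + w₁) + (Nf w₂ • p + w₂) := by
          rw [add_nsmul]; abel
        rw [heq]
        exact (dualMonoid n σ).add_mem (hNf w₁) (hNf w₂)
      have h1 : ψ (w₁ + w₂) = φ ⟨(Nf w₁ + Nf w₂) • p + (w₁ + w₂), hmem⟩
          - ((Nf w₁ + Nf w₂ : ℕ) : ℝ) * φ P := wd _ _ _ _ _
      have h2 : (⟨(Nf w₁ + Nf w₂) • p + (w₁ + w₂), hmem⟩ : dualMonoid n σ)
          = ⟨Nf w₁ • p + w₁, hNf w₁⟩ + ⟨Nf w₂ • p + w₂, hNf w₂⟩ := by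
        apply Subtype.ext
        show (Nf w₁ + Nf w₂) • p + (w₁ + w₂) = (Nf w₁ • p + w₁) + (Nf w₂ • p + w₂)
        rw [add_nsmul]; abel
      rw [h1, h2, map_add]
      push_cast
      simp only [hψ]
      ring
    set Ψ : (Fin n → ℤ) →+ ℝ := AddMonoidHom.mk' ψ ψadd with hΨ
    have hΨS : ∀ (z : Fin n → ℤ) (hz : z ∈ dualMonoid n σ), Ψ z = φ ⟨z, hz⟩ := by
      intro z hz
      have h0 : ((0 : ℕ) • p + z) ∈ dualMonoid n σ := by
        have : ((0 : ℕ) • p + z) = z := by rw [zero_nsmul, zero_add]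
        rw [this]; exact hz
      have hwd := wd z (Nf z) 0 (hNf z) h0
      have hz0 : (⟨(0 : ℕ) • p + z, h0⟩ : dualMonoid n σ) = ⟨z, hz⟩ :=
        Subtype.ext (by simp)
      rw [hz0] at hwd
      show ψ z = φ ⟨z, hz⟩
      rw [hψ]
      simpa using hwd
    set x : Fin n → ℝ := fun j => Ψ (fun k => if j = k then 1 else 0) with hx
    have hform : ∀ z : Fin n → ℤ, Ψ z = ∑ j, (z j : ℝ) * x j := by
      intro z
      have hdecomp : z = ∑ j, z j • (fun k => if j = k then (1 : ℤ) else 0) :=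
        pi_eq_sum_univ z
      calc Ψ z = Ψ (∑ j, z j • fun k => if j = k then (1 : ℤ) else 0) := by rw [← hdecomp]
        _ = ∑ j, Ψ (z j • fun k => if j = k then (1 : ℤ) else 0) := map_sum Ψ _ _
        _ = ∑ j, (z j : ℝ) * x j := Finset.sum_congr rfl fun j _ => by
            rw [map_zsmul, zsmul_eq_mul, hx]
    have hxσ : x ∈ σ := by
      rw [hσc]
      by_contra hxc
      obtain ⟨pf, hpff, hpfx⟩ := exists_int_sep hline hxc
      have hpfS : pf ∈ dualMonoid n σ := (hchar pf).mpr hpff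
      have h1 : φ ⟨pf, hpfS⟩ = ∑ j, (pf j : ℝ) * x j := by rw [← hΨS pf hpfS, hform]
      have h2 : ip (itr pf) x = ∑ j, (pf j : ℝ) * x j := hip_eq _ _
      have h3 := hφ ⟨pf, hpfS⟩
      rw [h1] at h3
      rw [h2] at hpfx
      linarith
    refine ⟨x, hxσ, ?_⟩
    rintro ⟨z, hz⟩
    rw [← hΨS z hz, hform]
end

section
/- By Gordan's lemma, the dual monoid S_σ = σ^∨ ∩ ℤⁿ of a rational polyhedral cone σ ⊂ ℝⁿ is a finitely generated monoid. -/
/-- The monoid of nonnegative integer solutions to a homogeneous system of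
linear equations with integer coefficients. -/
def eqMonoid {ι κ : Type*} [Fintype ι] (c : κ → ι → ℤ) : AddSubmonoid (ι → ℕ) where
  carrier := {a | ∀ i, ∑ j, c i j * (a j : ℤ) = 0}
  zero_mem' := by intro i; simp
  add_mem' := by
    intro a b ha hb i
    have : ∑ j, c i j * (((a + b) j : ℕ) : ℤ)
        = (∑ j, c i j * (a j : ℤ)) + ∑ j, c i j * (b j : ℤ) := by
      rw [← Finset.sum_add_distrib]
      apply Finset.sum_congr rfl
      intro j _
      push_cast [Pi.add_apply]
      ring
    rw [this, ha i, hb i, add_zero]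

lemma eqMonoid_sub_mem {ι κ : Type*} [Fintype ι] (c : κ → ι → ℤ)
    {a b : ι → ℕ} (ha : a ∈ eqMonoid c) (hb : b ∈ eqMonoid c) (hle : b ≤ a) :
    a - b ∈ eqMonoid c := by
  intro i
  have : ∑ j, c i j * (((a - b) j : ℕ) : ℤ)
      = (∑ j, c i j * (a j : ℤ)) - ∑ j, c i j * (b j : ℤ) := by
    rw [← Finset.sum_sub_distrib]
    apply Finset.sum_congr rfl
    intro j _
    have : ((a j - b j : ℕ) : ℤ) = (a j : ℤ) - (b j : ℤ) := by
      have hj : b j ≤ a j := hle j; omega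
    rw [Pi.sub_apply, this]; ring
  rw [this, ha i, hb i, sub_zero]

lemma eqMonoid_fg {ι κ : Type*} [Fintype ι] (c : κ → ι → ℤ) : (eqMonoid c).FG := by
  classical
  set S : Set (ι → ℕ) :=
    {m | m ∈ eqMonoid c ∧ m ≠ 0 ∧ ∀ m' ∈ eqMonoid c, m' ≠ 0 → m' ≤ m → m' = m} with hS
  have hSfin : S.Finite := by
    have hanti : IsAntichain (· ≤ ·) S := by
      intro x hx y hy hne hle
      exact hne (hy.2.2 x hx.1 hx.2.1 hle)
    haveI h : ∀ i : ι, IsWellOrder ((fun _ : ι => ℕ) i) (· < ·) := fun _ => inferInstance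
    exact hanti.finite_of_partiallyWellOrderedOn
      ((Set.IsPWO.pi (fun _ : ι => Set.IsPWO.of_linearOrder (Set.univ : Set ℕ))).mono
        (fun x _ i _ => Set.mem_univ (x i)))
  have hmain : ∀ N (a : ι → ℕ), (∑ j, a j) ≤ N → a ∈ eqMonoid c →
      a ∈ AddSubmonoid.closure S := by
    intro N
    induction N with
    | zero =>
      intro a hN ha
      have : a = 0 := by
        funext j
        have h1 : a j ≤ ∑ j, a j := Finset.single_le_sum (fun k _ => Nat.zero_le _)
          (Finset.mem_univ j)
        simp only [Pi.zero_apply]; omega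
      rw [this]; exact zero_mem _
    | succ N ih =>
      intro a hN ha
      by_cases h0 : a = 0
      · rw [h0]; exact zero_mem _
      · set T : Set (ι → ℕ) := {m | m ∈ eqMonoid c ∧ m ≠ 0 ∧ m ≤ a} with hT
        have hTfin : T.Finite := by
          apply Set.Finite.subset (Set.Finite.pi (fun j => Set.finite_Iic (a j)))
          intro m hm j _
          exact hm.2.2 j
        obtain ⟨m, hmT, hmmin⟩ := Set.Finite.exists_minimalFor id T hTfin ⟨a, ha, h0, le_rfl⟩
        have hmS : m ∈ S := by
          refine ⟨hmT.1, hmT.2.1, fun m' hm' hne' hle' => ?_⟩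
          exact le_antisymm hle' (hmmin (show m' ∈ T from ⟨hm', hne', le_trans hle' hmT.2.2⟩) hle')
        have hsub : a - m ∈ eqMonoid c := eqMonoid_sub_mem c ha hmT.1 hmT.2.2
        have hwt : (∑ j, (a - m) j) ≤ N := by
          have hpos : 1 ≤ ∑ j, m j := by
            by_contra h
            apply hmT.2.1
            push_neg at h
            funext j
            have h1 : m j ≤ ∑ j, m j := Finset.single_le_sum (fun k _ => Nat.zero_le _)
              (Finset.mem_univ j)
            simp only [Pi.zero_apply]; omega
          have heq : (∑ j, (a - m) j) + ∑ j, m j = ∑ j, a j := by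
            rw [← Finset.sum_add_distrib]
            apply Finset.sum_congr rfl
            intro j _
            have hj : m j ≤ a j := hmT.2.2 j
            simp only [Pi.sub_apply]; omega
          omega
        have : a = (a - m) + m := by
          funext j
          have hj : m j ≤ a j := hmT.2.2 j
          simp only [Pi.add_apply, Pi.sub_apply]; omega
        rw [this]
        exact add_mem (ih _ hwt hsub) (AddSubmonoid.subset_closure hmS)
  rw [AddSubmonoid.fg_iff]
  refine ⟨S, le_antisymm ?_ ?_, hSfin⟩
  · rw [AddSubmonoid.closure_le]
    exact fun m hm => hm.1
  · exact fun a ha => hmain _ a le_rfl ha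

/-- Gordan's lemma: the dual monoid `S_σ = σ^∨ ∩ ℤⁿ` of a rational polyhedral cone
`σ ⊂ ℝⁿ` (generated by finitely many integer vectors) is a finitely generated monoid. -/
theorem gordan (n : ℕ) (σ : Set (Fin n → ℝ))
    (hσ : ∃ (m : ℕ) (g : Fin m → (Fin n → ℤ)),
      σ = {x | ∃ c : Fin m → ℝ, (∀ i, 0 ≤ c i) ∧
        x = ∑ i, c i • (fun j => (g i j : ℝ))}) :
    (dualMonoid n σ).FG := by
  classical
  obtain ⟨m, g, rfl⟩ := hσ
  -- membership characterization
  have hmem : ∀ u : Fin n → ℤ,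
      (u ∈ dualMonoid n {x | ∃ c : Fin m → ℝ, (∀ i, 0 ≤ c i) ∧
        x = ∑ i, c i • (fun j => (g i j : ℝ))}) ↔ ∀ i, 0 ≤ ∑ j, g i j * u j := by
    intro u
    constructor
    · intro hu i
      have hgi : (fun j => (g i j : ℝ)) ∈
          {x | ∃ c : Fin m → ℝ, (∀ i, 0 ≤ c i) ∧
            x = ∑ i, c i • (fun j => (g i j : ℝ))} := by
        refine ⟨fun i' => if i' = i then 1 else 0, fun i' => by positivity, ?_⟩
        rw [Finset.sum_eq_single i]
        · simp
        · intro i' _ hne; simp [hne]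
        · intro h; exact absurd (Finset.mem_univ i) h
      have := hu _ hgi
      have hcast : ((∑ j, g i j * u j : ℤ) : ℝ) = ∑ j, (u j : ℝ) * (g i j : ℝ) := by
        push_cast
        apply Finset.sum_congr rfl
        intro j _; ring
      have : (0 : ℝ) ≤ ((∑ j, g i j * u j : ℤ) : ℝ) := by rw [hcast]; exact this
      exact_mod_cast this
    · intro hu x hx
      obtain ⟨c, hc, rfl⟩ := hx
      have hswap : ∑ j, (u j : ℝ) * (∑ i, c i • (fun j => (g i j : ℝ))) j
          = ∑ i, c i * ((∑ j, g i j * u j : ℤ) : ℝ) := by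
        have h1 : ∀ j, (∑ i, c i • (fun j => (g i j : ℝ))) j = ∑ i, c i * (g i j : ℝ) := by
          intro j
          rw [Finset.sum_apply]
          simp [Pi.smul_apply, smul_eq_mul]
        calc ∑ j, (u j : ℝ) * (∑ i, c i • (fun j => (g i j : ℝ))) j
            = ∑ j, ∑ i, (u j : ℝ) * (c i * (g i j : ℝ)) := by
              apply Finset.sum_congr rfl
              intro j _
              rw [h1 j, Finset.mul_sum]
          _ = ∑ i, ∑ j, (u j : ℝ) * (c i * (g i j : ℝ)) := Finset.sum_comm
          _ = ∑ i, c i * ((∑ j, g i j * u j : ℤ) : ℝ) := by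
              apply Finset.sum_congr rfl
              intro i _
              push_cast
              rw [Finset.mul_sum]
              apply Finset.sum_congr rfl
              intro j _; ring
      rw [hswap]
      apply Finset.sum_nonneg
      intro i _
      apply mul_nonneg (hc i)
      exact_mod_cast hu i
  -- the parametrizing monoid
  set ι := (Fin n ⊕ Fin n) ⊕ Fin m with hι
  set c : Fin m → ι → ℤ := fun i k =>
    Sum.elim (Sum.elim (fun j => g i j) (fun j => -g i j)) (fun i' => if i' = i then -1 else 0) k
    with hc
  set φ : (ι → ℕ) →+ (Fin n → ℤ) :=
    { toFun := fun a => fun j => (a (.inl (.inl j)) : ℤ) - (a (.inl (.inr j)) : ℤ)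
      map_zero' := by funext j; simp
      map_add' := by
        intro a b; funext j
        simp only [Pi.add_apply]
        push_cast
        ring } with hφ
  have key : dualMonoid n {x | ∃ c : Fin m → ℝ, (∀ i, 0 ≤ c i) ∧
        x = ∑ i, c i • (fun j => (g i j : ℝ))} = (eqMonoid c).map φ := by
    ext u
    rw [hmem u]
    constructor
    · intro hu
      refine ⟨fun k => Sum.elim
          (Sum.elim (fun j => (u j).toNat) (fun j => (-u j).toNat))
          (fun i => (∑ j, g i j * u j).toNat) k, ?_, ?_⟩
      · intro i
        rw [Fintype.sum_sum_type, Fintype.sum_sum_type]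
        have h1 : ∀ j : Fin n, c i (.inl (.inl j)) * (((u j).toNat : ℕ) : ℤ)
            + c i (.inl (.inr j)) * (((-u j).toNat : ℕ) : ℤ) = g i j * u j := by
          intro j
          simp only [hc, Sum.elim_inl, Sum.elim_inr]
          have h2 : ((u j).toNat : ℤ) - ((-u j).toNat : ℤ) = u j := by omega
          linear_combination (g i j) * h2
        have h3 : (∑ i' : Fin m, c i (.inr i') *
            ((Sum.elim (Sum.elim (fun j => (u j).toNat) (fun j => (-u j).toNat))
              (fun i => (∑ j, g i j * u j).toNat) (Sum.inr i') : ℕ) : ℤ))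
            = -(∑ j, g i j * u j) := by
          simp only [hc, Sum.elim_inr]
          rw [Finset.sum_eq_single i]
          · simp only [if_pos rfl, eq_self_iff_true, if_true]
            have := hu i
            omega
          · intro i' _ hne; simp [hne]
          · intro h; exact absurd (Finset.mem_univ i) h
        simp only [Sum.elim_inl, Sum.elim_inr] at h3 ⊢
        rw [h3]
        have h4 : (∑ j : Fin n, c i (.inl (.inl j)) * (((u j).toNat : ℕ) : ℤ))
            + (∑ j : Fin n, c i (.inl (.inr j)) * (((-u j).toNat : ℕ) : ℤ))
            = ∑ j, g i j * u j := by
          rw [← Finset.sum_add_distrib]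
          exact Finset.sum_congr rfl (fun j _ => h1 j)
        omega
      · funext j
        simp only [hφ, AddMonoidHom.coe_mk, ZeroHom.coe_mk, Sum.elim_inl, Sum.elim_inr]
        omega
    · rintro ⟨a, ha, rfl⟩ i
      have := ha i
      rw [Fintype.sum_sum_type, Fintype.sum_sum_type] at this
      have h3 : (∑ i' : Fin m, c i (.inr i') * (a (.inr i') : ℤ))
          = -(a (.inr i) : ℤ) := by
        simp only [hc, Sum.elim_inr]
        rw [Finset.sum_eq_single i]
        · simp
        · intro i' _ hne; simp [hne]
        · intro h; exact absurd (Finset.mem_univ i) h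
      rw [h3] at this
      have h4 : ∑ j, g i j * (φ a) j = (a (.inr i) : ℤ) := by
        have h5 : ∑ j, g i j * (φ a) j
            = (∑ j : Fin n, c i (.inl (.inl j)) * (a (.inl (.inl j)) : ℤ))
            + ∑ j : Fin n, c i (.inl (.inr j)) * (a (.inl (.inr j)) : ℤ) := by
          rw [← Finset.sum_add_distrib]
          apply Finset.sum_congr rfl
          intro j _
          simp only [hφ, hc, AddMonoidHom.coe_mk, ZeroHom.coe_mk, Sum.elim_inl, Sum.elim_inr]
          ring
        omega
      rw [h4]
      exact Int.ofNat_nonneg _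
  rw [key]
  exact (eqMonoid_fg c).map φ
end
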